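/- arXiv:2512.07883 — 2 statements merged into one kernel-verified Lean document; each statement's English description precedes it below -/
import Mathlib

section
/- Let φ ∈ C²([0,∞)) be a nonnegative convex function with φ(0)=0, φ'(0)=1, and φ' concave. Then for all u, v ≥ 0 one has u·φ'(v) ≤ φ(u) + φ(v). -/
theorem stmt0 (φ : ℝ → ℝ)
    (hC2 : ContDiffOn ℝ 2 φ (Set.Ici 0))
    (hnn : ∀ x ≥ (0:ℝ), 0 ≤ φ x)
    (hconv : ConvexOn ℝ (Set.Ici 0) φ)
    (h0 : φ 0 = 0) (h0' : deriv φ 0 = 1)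
    (hconc : ConcaveOn ℝ (Set.Ici 0) (deriv φ)) :
    ∀ u v : ℝ, 0 ≤ u → 0 ≤ v → u * deriv φ v ≤ φ u + φ v := by
  -- differentiability at every point of Ici 0
  have hd0 : DifferentiableAt ℝ φ 0 := by
    by_contra h
    rw [deriv_zero_of_not_differentiableAt h] at h0'
    norm_num at h0'
  have hdAt : ∀ x : ℝ, 0 ≤ x → DifferentiableAt ℝ φ x := by
    intro x hx
    rcases eq_or_lt_of_le hx with rfl | hx'
    · exact hd0
    · exact ((hC2.differentiableOn (by norm_num)) x hx).differentiableAt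
        (Ici_mem_nhds hx')
  -- tangent line inequality from convexity
  have keyA : ∀ u v : ℝ, 0 ≤ u → 0 ≤ v → deriv φ v * (u - v) ≤ φ u - φ v := by
    intro u v hu hv
    rcases lt_trichotomy u v with h | h | h
    · have := hconv.slope_le_deriv hu hv h (hdAt v hv)
      rw [slope_def_field] at this
      have hvu : 0 < v - u := by linarith
      rw [div_le_iff₀ hvu] at this
      nlinarith
    · simp [h]
    · have := hconv.deriv_le_slope hv hu h (hdAt v hv)
      rw [slope_def_field] at this
      have huv : 0 < u - v := by linarith
      rw [le_div_iff₀ huv] at this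
      nlinarith
  -- continuity of deriv φ on Ici 0
  have heq : Set.EqOn (derivWithin φ (Set.Ici 0)) (deriv φ) (Set.Ici 0) := by
    intro x hx
    exact (hdAt x hx).derivWithin (uniqueDiffOn_Ici 0 x hx)
  have hcont : ContinuousOn (deriv φ) (Set.Ici 0) := by
    have := (hC2.derivWithin (m := 1) (uniqueDiffOn_Ici 0) (by norm_num)).continuousOn
    exact this.congr heq.symm
  -- key B : v * deriv φ v ≤ 2 * φ v
  have keyB : ∀ v : ℝ, 0 ≤ v → v * deriv φ v ≤ 2 * φ v := by
    intro v hv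
    rcases eq_or_lt_of_le hv with rfl | hv'
    · simp [h0]
    · have hInt : IntervalIntegrable (deriv φ) MeasureTheory.volume 0 v := by
        apply ContinuousOn.intervalIntegrable
        apply hcont.mono
        rw [Set.uIcc_of_le hv]
        exact fun t ht => ht.1
      have hftc : ∫ t in (0:ℝ)..v, deriv φ t = φ v - φ 0 := by
        apply intervalIntegral.integral_deriv_eq_sub
        · intro t ht
          rw [Set.uIcc_of_le hv] at ht
          exact hdAt t ht.1
        · exact hInt
      have hmono : ∀ t ∈ Set.Icc (0:ℝ) v, t * (deriv φ v / v) ≤ deriv φ t := by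
        intro t ht
        have ha : (0:ℝ) ≤ 1 - t / v := by
          rw [sub_nonneg, div_le_one hv']
          exact ht.2
        have hb : (0:ℝ) ≤ t / v := div_nonneg ht.1 hv'.le
        have hab : (1 - t / v) + t / v = 1 := by ring
        have := hconc.2 (Set.self_mem_Ici) (Set.mem_Ici.mpr hv) ha hb hab
        have hts : (1 - t / v) • (0:ℝ) + (t / v) • v = t := by
          field_simp
          simp only [smul_eq_mul]
          field_simp
          ring
        rw [hts] at this
        rw [smul_eq_mul, smul_eq_mul, h0'] at this
        have hr : t / v * deriv φ v = t * (deriv φ v / v) := by ring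
        linarith [hr ▸ this]
      have hintmono : ∫ t in (0:ℝ)..v, t * (deriv φ v / v) ≤ ∫ t in (0:ℝ)..v, deriv φ t := by
        apply intervalIntegral.integral_mono_on hv'.le _ hInt hmono
        exact (continuous_id.mul continuous_const).intervalIntegrable 0 v
      have hcomp : ∫ t in (0:ℝ)..v, t * (deriv φ v / v) = v * deriv φ v / 2 := by
        rw [intervalIntegral.integral_mul_const, integral_id]
        field_simp
        ring
      rw [hcomp, hftc, h0] at hintmono
      linarith
  intro u v hu hv
  have hA := keyA u v hu hv
  have hB := keyB v hv
  nlinarith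
end

section
/- Let c^N be the nonnegative mass-conserving solution of the truncated discrete CA system with Σ_{i=1}^N i c_i^{in,N} ≤ M₁ < ∞. Suppose μ_i := sup_j K_{i,j}/j < ∞ and ξ_i := sup_j C_{i,j} < ∞ for each i. Then for every i and all t ≥ 0, |dc_i^N(t)/dt| ≤ (μ_{i−1} + ξ_{i−1} + 2(μ_i + ξ_i)) · M₁², a bound independent of N and t. -/
/-- The truncated discrete condensing-aggregation reaction term `Q_i^N(c)`
(with the convention `c 0 = 0` imposed as a hypothesis). -/
def Qtr (K C : ℕ → ℕ → ℝ) (N : ℕ) (c : ℕ → ℝ) (i : ℕ) : ℝ :=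
    c (i-1) * (∑ j ∈ Finset.Icc 1 (i-1), (j:ℝ) * K (i-1) j * c j)
  - c i * (∑ j ∈ Finset.Icc 1 i, (j:ℝ) * K i j * c j)
  - c i * (∑ j ∈ Finset.Icc i N, K i j * c j)
  + c (i-1) * (∑ j ∈ Finset.Icc (i-1) N, (j:ℝ) * C (i-1) j * c j)
  - c i * (∑ j ∈ Finset.Icc i N, (j:ℝ) * C i j * c j)
  - c i * (∑ j ∈ Finset.Icc 1 i, C i j * c j)

set_option maxHeartbeats 1600000 in
theorem stmt12 (K C : ℕ → ℕ → ℝ)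
    (hKnn : ∀ i j, 0 ≤ K i j) (hCnn : ∀ i j, 0 ≤ C i j)
    (hKsym : ∀ i j, K i j = K j i) (hCsym : ∀ i j, C i j = C j i)
    (N : ℕ) (hN : 3 ≤ N) (M₁ : ℝ) (μ ξ : ℕ → ℝ)
    (hμ0 : μ 0 = 0) (hξ0 : ξ 0 = 0)
    (hμnn : ∀ i, 0 ≤ μ i) (hξnn : ∀ i, 0 ≤ ξ i)
    (hμ : ∀ i j, 1 ≤ j → K i j ≤ μ i * j)
    (hξ : ∀ i j, 1 ≤ j → C i j ≤ ξ i)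
    (c : ℝ → ℕ → ℝ) (hzero : ∀ t, c t 0 = 0)
    (hnn : ∀ t ≥ (0:ℝ), ∀ i, 0 ≤ c t i)
    (hmass : ∀ t ≥ (0:ℝ), ∑ j ∈ Finset.Icc 1 N, (j:ℝ) * c t j ≤ M₁)
    (hsol : ∀ t ≥ (0:ℝ), ∀ i ∈ Finset.Icc 1 N,
      HasDerivAt (fun s => c s i) (Qtr K C N (c t) i) t) :
    ∀ i ∈ Finset.Icc 1 N, ∀ t ≥ (0:ℝ),
      |Qtr K C N (c t) i| ≤ (μ (i-1) + ξ (i-1) + 2 * (μ i + ξ i)) * M₁^2 := by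
  intro i hi t ht
  simp only [Finset.mem_Icc] at hi
  obtain ⟨hi1, hiN⟩ := hi
  have hc0 := hzero t
  have hcn := hnn t ht
  have hsum_nonneg : (0:ℝ) ≤ ∑ j ∈ Finset.Icc 1 N, (j:ℝ) * c t j :=
    Finset.sum_nonneg fun j _ => mul_nonneg (by positivity) (hcn j)
  have hM0 : (0:ℝ) ≤ M₁ := le_trans hsum_nonneg (hmass t ht)
  have hIcc0 : ∑ j ∈ Finset.Icc 0 N, (j:ℝ) * c t j ≤ M₁ := by
    have heq : ∑ j ∈ Finset.Icc 1 N, (j:ℝ) * c t j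
        = ∑ j ∈ Finset.Icc 0 N, (j:ℝ) * c t j := by
      apply Finset.sum_subset
      · intro x hx; simp only [Finset.mem_Icc] at hx ⊢; omega
      · intro x hx hnx
        simp only [Finset.mem_Icc] at hx hnx
        have : x = 0 := by omega
        simp [this]
    linarith [hmass t ht]
  have hjc : ∀ k, k ≤ N → (k:ℝ) * c t k ≤ M₁ := by
    intro k hk
    refine le_trans (Finset.single_le_sum (f := fun (j : ℕ) => (j:ℝ) * c t j) ?_ ?_) hIcc0
    · intro j _; exact mul_nonneg (by positivity) (hcn j)
    · simp only [Finset.mem_Icc]; omega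
  have key : ∀ (s : Finset ℕ) (g : ℕ → ℝ) (A : ℝ), 0 ≤ A → s ⊆ Finset.Icc 0 N →
      (∀ j ∈ s, g j ≤ A * ((j:ℝ) * c t j)) → ∑ j ∈ s, g j ≤ A * M₁ := by
    intro s g A hA hs hg
    calc ∑ j ∈ s, g j ≤ ∑ j ∈ s, A * ((j:ℝ) * c t j) := Finset.sum_le_sum hg
      _ ≤ ∑ j ∈ Finset.Icc 0 N, A * ((j:ℝ) * c t j) := by
          apply Finset.sum_le_sum_of_subset_of_nonneg hs
          intro j _ _; exact mul_nonneg hA (mul_nonneg (by positivity) (hcn j))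
      _ = A * ∑ j ∈ Finset.Icc 0 N, ((j:ℝ) * c t j) := (Finset.mul_sum _ _ _).symm
      _ ≤ A * M₁ := mul_le_mul_of_nonneg_left hIcc0 hA
  have hcleM : ∀ k, k ≤ N → c t k ≤ M₁ := by
    intro k hk
    rcases Nat.eq_zero_or_pos k with h | h
    · simpa [h, hc0] using hM0
    · have h1 := hjc k hk
      have hk1 : (1:ℝ) ≤ (k:ℝ) := by exact_mod_cast h
      nlinarith [hcn k]
  -- nonnegativity of the six sums
  have N1 : (0:ℝ) ≤ ∑ j ∈ Finset.Icc 1 (i-1), (j:ℝ) * K (i-1) j * c t j :=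
    Finset.sum_nonneg fun j _ =>
      mul_nonneg (mul_nonneg (by positivity) (hKnn _ _)) (hcn j)
  have N2 : (0:ℝ) ≤ ∑ j ∈ Finset.Icc 1 i, (j:ℝ) * K i j * c t j :=
    Finset.sum_nonneg fun j _ =>
      mul_nonneg (mul_nonneg (by positivity) (hKnn _ _)) (hcn j)
  have N3 : (0:ℝ) ≤ ∑ j ∈ Finset.Icc i N, K i j * c t j :=
    Finset.sum_nonneg fun j _ => mul_nonneg (hKnn _ _) (hcn j)
  have N4 : (0:ℝ) ≤ ∑ j ∈ Finset.Icc (i-1) N, (j:ℝ) * C (i-1) j * c t j :=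
    Finset.sum_nonneg fun j _ =>
      mul_nonneg (mul_nonneg (by positivity) (hCnn _ _)) (hcn j)
  have N5 : (0:ℝ) ≤ ∑ j ∈ Finset.Icc i N, (j:ℝ) * C i j * c t j :=
    Finset.sum_nonneg fun j _ =>
      mul_nonneg (mul_nonneg (by positivity) (hCnn _ _)) (hcn j)
  have N6 : (0:ℝ) ≤ ∑ j ∈ Finset.Icc 1 i, C i j * c t j :=
    Finset.sum_nonneg fun j _ => mul_nonneg (hCnn _ _) (hcn j)
  -- bounds on the six sums
  have hS1 : ∑ j ∈ Finset.Icc 1 (i-1), (j:ℝ) * K (i-1) j * c t j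
      ≤ (μ (i-1) * ((i-1:ℕ):ℝ)) * M₁ := by
    apply key
    · exact mul_nonneg (hμnn _) (by positivity)
    · intro x hx; simp only [Finset.mem_Icc] at hx ⊢; omega
    · intro j hj
      simp only [Finset.mem_Icc] at hj
      have hj1 : (1:ℝ) ≤ (j:ℝ) := by exact_mod_cast hj.1
      have hjb : (j:ℝ) ≤ ((i-1:ℕ):ℝ) := by exact_mod_cast hj.2
      have hK := hμ (i-1) j hj.1
      nlinarith [hcn j, hμnn (i-1), mul_nonneg (hμnn (i-1)) (mul_nonneg (by positivity : (0:ℝ) ≤ (j:ℝ)) (hcn j)), mul_le_mul_of_nonneg_right hK (hcn j)]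
  have hS2 : ∑ j ∈ Finset.Icc 1 i, (j:ℝ) * K i j * c t j
      ≤ (μ i * (i:ℝ)) * M₁ := by
    apply key
    · exact mul_nonneg (hμnn _) (by positivity)
    · intro x hx; simp only [Finset.mem_Icc] at hx ⊢; omega
    · intro j hj
      simp only [Finset.mem_Icc] at hj
      have hj1 : (1:ℝ) ≤ (j:ℝ) := by exact_mod_cast hj.1
      have hjb : (j:ℝ) ≤ (i:ℝ) := by exact_mod_cast hj.2
      have hK := hμ i j hj.1
      nlinarith [hcn j, hμnn i, mul_nonneg (hμnn i) (mul_nonneg (by positivity : (0:ℝ) ≤ (j:ℝ)) (hcn j)), mul_le_mul_of_nonneg_right hK (hcn j)]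
  have hS3 : ∑ j ∈ Finset.Icc i N, K i j * c t j ≤ μ i * M₁ := by
    apply key
    · exact hμnn i
    · intro x hx; simp only [Finset.mem_Icc] at hx ⊢; omega
    · intro j hj
      simp only [Finset.mem_Icc] at hj
      have hK := hμ i j (by omega)
      nlinarith [hcn j, mul_le_mul_of_nonneg_right hK (hcn j)]
  have hS4 : ∑ j ∈ Finset.Icc (i-1) N, (j:ℝ) * C (i-1) j * c t j
      ≤ ξ (i-1) * M₁ := by
    apply key
    · exact hξnn _
    · intro x hx; simp only [Finset.mem_Icc] at hx ⊢; omega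
    · intro j hj
      rcases Nat.eq_zero_or_pos j with h | h
      · simp [h]
      · have hC := hξ (i-1) j h
        have hjn : (0:ℝ) ≤ (j:ℝ) := by positivity
        nlinarith [hcn j, mul_le_mul_of_nonneg_right hC (mul_nonneg hjn (hcn j))]
  have hS5 : ∑ j ∈ Finset.Icc i N, (j:ℝ) * C i j * c t j ≤ ξ i * M₁ := by
    apply key
    · exact hξnn _
    · intro x hx; simp only [Finset.mem_Icc] at hx ⊢; omega
    · intro j hj
      simp only [Finset.mem_Icc] at hj
      have hC := hξ i j (by omega)
      have hjn : (0:ℝ) ≤ (j:ℝ) := by positivity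
      nlinarith [hcn j, mul_le_mul_of_nonneg_right hC (mul_nonneg hjn (hcn j))]
  have hS6 : ∑ j ∈ Finset.Icc 1 i, C i j * c t j ≤ ξ i * M₁ := by
    apply key
    · exact hξnn _
    · intro x hx; simp only [Finset.mem_Icc] at hx ⊢; omega
    · intro j hj
      simp only [Finset.mem_Icc] at hj
      have hC := hξ i j hj.1
      have hj1 : (1:ℝ) ≤ (j:ℝ) := by exact_mod_cast hj.1
      nlinarith [hcn j, mul_le_mul_of_nonneg_right hC (hcn j), mul_nonneg (hξnn i) (hcn j)]
  -- bounds on the six terms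
  have hb1 : ((i-1:ℕ):ℝ) * c t (i-1) ≤ M₁ := hjc (i-1) (by omega)
  have hb2 : (i:ℝ) * c t i ≤ M₁ := hjc i hiN
  have hcm1 : c t (i-1) ≤ M₁ := hcleM (i-1) (by omega)
  have hcm : c t i ≤ M₁ := hcleM i hiN
  have T1 : c t (i-1) * (∑ j ∈ Finset.Icc 1 (i-1), (j:ℝ) * K (i-1) j * c t j)
      ≤ μ (i-1) * M₁^2 := by
    nlinarith [mul_le_mul_of_nonneg_left hS1 (hcn (i-1)),
      mul_le_mul_of_nonneg_left hb1 (mul_nonneg (hμnn (i-1)) hM0)]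
  have T2 : c t i * (∑ j ∈ Finset.Icc 1 i, (j:ℝ) * K i j * c t j)
      ≤ μ i * M₁^2 := by
    nlinarith [mul_le_mul_of_nonneg_left hS2 (hcn i),
      mul_le_mul_of_nonneg_left hb2 (mul_nonneg (hμnn i) hM0)]
  have T3 : c t i * (∑ j ∈ Finset.Icc i N, K i j * c t j) ≤ μ i * M₁^2 := by
    nlinarith [mul_le_mul_of_nonneg_left hS3 (hcn i),
      mul_le_mul_of_nonneg_right hcm (mul_nonneg (hμnn i) hM0)]
  have T4 : c t (i-1) * (∑ j ∈ Finset.Icc (i-1) N, (j:ℝ) * C (i-1) j * c t j)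
      ≤ ξ (i-1) * M₁^2 := by
    nlinarith [mul_le_mul_of_nonneg_left hS4 (hcn (i-1)),
      mul_le_mul_of_nonneg_right hcm1 (mul_nonneg (hξnn (i-1)) hM0)]
  have T5 : c t i * (∑ j ∈ Finset.Icc i N, (j:ℝ) * C i j * c t j)
      ≤ ξ i * M₁^2 := by
    nlinarith [mul_le_mul_of_nonneg_left hS5 (hcn i),
      mul_le_mul_of_nonneg_right hcm (mul_nonneg (hξnn i) hM0)]
  have T6 : c t i * (∑ j ∈ Finset.Icc 1 i, C i j * c t j) ≤ ξ i * M₁^2 := by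
    nlinarith [mul_le_mul_of_nonneg_left hS6 (hcn i),
      mul_le_mul_of_nonneg_right hcm (mul_nonneg (hξnn i) hM0)]
  have P1 := mul_nonneg (hcn (i-1)) N1
  have P2 := mul_nonneg (hcn i) N2
  have P3 := mul_nonneg (hcn i) N3
  have P4 := mul_nonneg (hcn (i-1)) N4
  have P5 := mul_nonneg (hcn i) N5
  have P6 := mul_nonneg (hcn i) N6
  have hp1 : (0:ℝ) ≤ μ (i-1) * M₁^2 := mul_nonneg (hμnn _) (sq_nonneg _)
  have hp2 : (0:ℝ) ≤ ξ (i-1) * M₁^2 := mul_nonneg (hξnn _) (sq_nonneg _)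
  have hp3 : (0:ℝ) ≤ μ i * M₁^2 := mul_nonneg (hμnn _) (sq_nonneg _)
  have hp4 : (0:ℝ) ≤ ξ i * M₁^2 := mul_nonneg (hξnn _) (sq_nonneg _)
  rw [Qtr, abs_le]
  constructor <;> nlinarith
end
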